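/- Let V be a real vector space of finite dimension 4 and let e₁, e₂ ∈ V be linearly independent. The linear map ⋀²V × ⋀²V → ⋀³V defined by (X₁, X₂) ↦ e₁∧X₂ − e₂∧X₁ is surjective, and its kernel has dimension 8. (This is the pointwise statement that the corner map W_{∂∂}^{(1,2)} is surjective but not injective, with 8-dimensional kernel.) -/

import Mathlib

open ExteriorAlgebra

variable {V : Type*} [AddCommGroup V] [Module ℝ V]


lemma iMulti_mem_of_basis {I : Type*} [Fintype I] (b : Module.Basis I ℝ V) {n : ℕ}
    (S : Submodule ℝ (ExteriorAlgebra ℝ V))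
    (H : ∀ m : Fin n → I, ιMulti ℝ n (b ∘ m) ∈ S) (v : Fin n → V) :
    ιMulti ℝ n v ∈ S := by
  classical
  have hv : v = fun i => ∑ j : I, b.repr (v i) j • b j := by
    funext i; rw [Module.Basis.sum_repr b (v i)]
  have hsum := (ιMulti ℝ n (M := V)).toMultilinearMap.map_sum
    (g := fun i j => b.repr (v i) j • b j)
  have hsm := fun m : Fin n → I => (ιMulti ℝ n (M := V)).toMultilinearMap.map_smul_univ
    (fun i => b.repr (v i) (m i)) (fun i => b (m i))
  simp only [AlternatingMap.coe_multilinearMap] at hsum hsm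
  rw [hv, hsum]
  refine Submodule.sum_mem S fun m _ => ?_
  rw [hsm m]
  exact Submodule.smul_mem S _ (H m)

lemma span_iMulti_family {I : Type*} [Fintype I] [LinearOrder I] (b : Module.Basis I ℝ V) (n : ℕ) :
    Submodule.span ℝ (Set.range (ιMulti_family ℝ n b)) = ⋀[ℝ]^n V := by
  classical
  refine le_antisymm (Submodule.span_le.2 ?_) ?_
  · rintro _ ⟨s, rfl⟩
    exact ιMulti_range ℝ n ⟨_, rfl⟩
  · rw [← ιMulti_span_fixedDegree]
    rw [Submodule.span_le]
    rintro _ ⟨v, rfl⟩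
    refine iMulti_mem_of_basis b _ (fun m => ?_) v
    by_cases hm : Function.Injective m
    · set σ := Tuple.sort m with hσ
      have hmono : Monotone (m ∘ σ) := Tuple.monotone_sort m
      have hsm : StrictMono (m ∘ σ) :=
        hmono.strictMono_of_injective (hm.comp σ.injective)
      set s : Finset I := Finset.univ.image m with hs
      have hcard : s.card = n := by
        rw [hs, Finset.card_image_of_injective _ hm, Finset.card_univ, Fintype.card_fin]
      have hmem : ∀ i, (m ∘ σ) i ∈ s := fun i => by
        simp [hs, Finset.mem_image]
      have huniq : (m ∘ σ) = s.orderEmbOfFin hcard :=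
        Finset.orderEmbOfFin_unique hcard hmem hsm
      have hfam : ιMulti_family ℝ n b ⟨s, hcard⟩ = ιMulti ℝ n (b ∘ (m ∘ σ)) := by
        rw [huniq]
        rfl
      have hperm : ιMulti ℝ n (b ∘ m) =
          Equiv.Perm.sign σ • ιMulti ℝ n (b ∘ (m ∘ σ)) := by
        have h := (ιMulti ℝ n (M := V)).map_perm (b ∘ m) σ
        rw [show b ∘ (m ∘ σ) = (b ∘ m) ∘ σ from rfl, h, smul_smul, Int.units_mul_self,
          one_smul]
      rw [hperm, ← hfam]
      exact Submodule.smul_mem _ _ (Submodule.subset_span ⟨_, rfl⟩)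
    · have : ¬ Function.Injective (b ∘ m) := fun h => hm (fun i j hij => h (by simp [hij]))
      rw [AlternatingMap.map_eq_zero_of_not_injective _ _ this]
      exact Submodule.zero_mem _

section Dual
variable {I : Type*} [Fintype I] [LinearOrder I] (b : Module.Basis I ℝ V) {n : ℕ}

/-- Dual functional associated to a tuple of indices. -/
noncomputable def dualFam (s : Fin n → I) : ExteriorAlgebra ℝ V →ₗ[ℝ] ℝ :=
  liftAlternating (Function.update 0 n
    (MultilinearMap.alternatization
      ((MultilinearMap.mkPiAlgebra ℝ (Fin n) ℝ).compLinearMap (fun i => b.coord (s i)))))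

lemma dualFam_apply (s : Fin n → I) (v : Fin n → V) :
    dualFam b s (ιMulti ℝ n v) =
      ∑ σ : Equiv.Perm (Fin n), Equiv.Perm.sign σ •
        ∏ i, b.repr (v (σ i)) (s i) := by
  classical
  rw [dualFam, liftAlternating_apply_ιMulti, Function.update_self,
    MultilinearMap.alternatization_apply]
  simp only [MultilinearMap.domDomCongr_apply, MultilinearMap.compLinearMap_apply,
    MultilinearMap.mkPiAlgebra_apply, Module.Basis.coord_apply]

lemma dualFam_family (s t : {u : Finset I // u.card = n}) :
    dualFam b (fun i => s.1.orderEmbOfFin s.2 i) (ιMulti_family ℝ n b t) =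
      if s = t then 1 else 0 := by
  classical
  have hfam : ιMulti_family ℝ n b t = ιMulti ℝ n (fun i => b (t.1.orderEmbOfFin t.2 i)) := by
    unfold ιMulti_family
    congr 1
  rw [hfam, dualFam_apply]
  have hentry : ∀ (σ : Equiv.Perm (Fin n)) (i : Fin n),
      b.repr (b (t.1.orderEmbOfFin t.2 (σ i))) (s.1.orderEmbOfFin s.2 i) =
        if t.1.orderEmbOfFin t.2 (σ i) = s.1.orderEmbOfFin s.2 i then (1 : ℝ) else 0 := by
    intro σ i
    simp [Module.Basis.repr_self, Finsupp.single_apply]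
  split_ifs with h
  · subst h
    rw [Finset.sum_eq_single 1]
    · simp only [Equiv.Perm.sign_one, one_smul, Equiv.Perm.one_apply]
      refine Finset.prod_eq_one fun i _ => by simp [Module.Basis.repr_self]
    · intro σ _ hσ
      obtain ⟨i, hi⟩ : ∃ i, σ i ≠ i := by
        by_contra hcon
        push_neg at hcon
        exact hσ (Equiv.ext hcon)
      rw [Finset.prod_eq_zero (Finset.mem_univ i), smul_zero]
      rw [hentry σ i]
      simp only [ite_eq_right_iff]
      intro hc
      exact absurd ((s.1.orderEmbOfFin s.2).injective hc) hi
    · intro h; exact absurd (Finset.mem_univ _) h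
  · have hst : ¬ (s.1 ⊆ t.1) := by
      intro hsub
      exact h (Subtype.ext (Finset.eq_of_subset_of_card_le hsub (by rw [s.2, t.2])))
    obtain ⟨x, hxs, hxt⟩ := Finset.not_subset.1 hst
    obtain ⟨i₀, hi₀⟩ : ∃ i₀, s.1.orderEmbOfFin s.2 i₀ = x := by
      have : x ∈ Set.range (s.1.orderEmbOfFin s.2) := by
        rw [Finset.range_orderEmbOfFin]; exact_mod_cast hxs
      exact this
    refine Finset.sum_eq_zero fun σ _ => ?_
    rw [Finset.prod_eq_zero (Finset.mem_univ i₀), smul_zero]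
    rw [hentry σ i₀]
    simp only [ite_eq_right_iff]
    intro hc
    exact absurd (hi₀ ▸ hc ▸ Finset.orderEmbOfFin_mem t.1 t.2 (σ i₀)) hxt

lemma indep_iMulti_family : LinearIndependent ℝ (ιMulti_family ℝ n b) := by
  classical
  rw [Fintype.linearIndependent_iff]
  intro g hg t
  have h1 := congrArg (dualFam b (fun i => t.1.orderEmbOfFin t.2 i)) hg
  rw [map_sum, map_zero] at h1
  have h2 : ∀ s : Set.powersetCard I n,
      dualFam b (fun i => t.1.orderEmbOfFin t.2 i) (g s • ιMulti_family ℝ n b s) =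
        if t = s then g s else 0 := by
    intro s
    rw [map_smul, dualFam_family b t s, smul_eq_mul]
    split_ifs with ha hb hb
    · simp
    · exact absurd ha hb
    · exact absurd hb ha
    · simp
  rw [Finset.sum_congr rfl (fun s _ => h2 s), Finset.sum_ite_eq] at h1
  simpa using h1

include b in
lemma finrank_exteriorPower_eq :
    Module.finrank ℝ (⋀[ℝ]^n V : Submodule ℝ (ExteriorAlgebra ℝ V)) =
      (Fintype.card I).choose n := by
  classical
  rw [← span_iMulti_family b n, finrank_span_eq_card (indep_iMulti_family b),
    Fintype.card_eq_nat_card, Set.powersetCard.card, Nat.card_eq_fintype_card]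
end Dual

/-- The pointwise corner map `W_{∂∂}^{(1,2)} : ⋀²V × ⋀²V → ⋀³V`,
`(X₁, X₂) ↦ e₁∧X₂ − e₂∧X₁` (valued in the exterior algebra). -/
noncomputable def W12 (e₁ e₂ : V) :
    (⋀[ℝ]^2 V) × (⋀[ℝ]^2 V) →ₗ[ℝ] ExteriorAlgebra ℝ V :=
  (LinearMap.mulLeft ℝ (ι ℝ e₁)).comp
      ((⋀[ℝ]^2 V).subtype.comp (LinearMap.snd ℝ (⋀[ℝ]^2 V) (⋀[ℝ]^2 V)))
    - (LinearMap.mulLeft ℝ (ι ℝ e₂)).comp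
      ((⋀[ℝ]^2 V).subtype.comp (LinearMap.fst ℝ (⋀[ℝ]^2 V) (⋀[ℝ]^2 V)))


lemma W12_apply (e₁ e₂ : V) (X : (⋀[ℝ]^2 V) × (⋀[ℝ]^2 V)) :
    W12 e₁ e₂ X = ι ℝ e₁ * (X.2 : ExteriorAlgebra ℝ V) - ι ℝ e₂ * (X.1 : ExteriorAlgebra ℝ V) := by
  simp [W12]

lemma iMulti_three_apply (v : Fin 3 → V) :
    ιMulti ℝ 3 v = ι ℝ (v 0) * (ι ℝ (v 1) * ι ℝ (v 2)) := by
  simp [ιMulti_apply, List.ofFn_succ, Matrix.vecTail]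

lemma iMulti_two_apply (v : Fin 2 → V) :
    ιMulti ℝ 2 v = ι ℝ (v 0) * ι ℝ (v 1) := by
  simp [ιMulti_apply, List.ofFn_succ, Matrix.vecTail, mul_assoc]

lemma mul_mem_ext2 (x y : V) : ι ℝ x * ι ℝ y ∈ ⋀[ℝ]^2 V := by
  rw [show (⋀[ℝ]^2 V) = LinearMap.range (ι ℝ (M := V)) * LinearMap.range (ι ℝ (M := V)) from by
    rw [exteriorPower, sq]]
  exact Submodule.mul_mem_mul (LinearMap.mem_range_self _ x) (LinearMap.mem_range_self _ y)

lemma mem_ext3 (x : V) {u : ExteriorAlgebra ℝ V} (hu : u ∈ ⋀[ℝ]^2 V) :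
    ι ℝ x * u ∈ ⋀[ℝ]^3 V := by
  rw [show (⋀[ℝ]^3 V) = LinearMap.range (ι ℝ (M := V)) * (⋀[ℝ]^2 V) from by
    rw [exteriorPower, exteriorPower, show (3 : ℕ) = 1 + 2 from rfl, pow_add, pow_one]]
  exact Submodule.mul_mem_mul (LinearMap.mem_range_self _ x) hu

lemma ι_anticomm' (x y : V) : ι ℝ x * ι ℝ y = -(ι ℝ y * ι ℝ x) :=
  eq_neg_of_add_eq_zero_left (ι_add_mul_swap x y)

lemma triple_mem (e₁ e₂ : V) (x y z : V)
    (h : x = e₁ ∨ x = e₂ ∨ y = e₁ ∨ y = e₂ ∨ z = e₁ ∨ z = e₂ ∨ x = y ∨ y = z ∨ x = z) :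
    ι ℝ x * (ι ℝ y * ι ℝ z) ∈ LinearMap.range (W12 e₁ e₂) := by
  set S := LinearMap.range (W12 e₁ e₂) with hS
  have h1 : ∀ u ∈ ⋀[ℝ]^2 V, ι ℝ e₁ * u ∈ S :=
    fun u hu => ⟨(0, ⟨u, hu⟩), by simp [W12_apply]⟩
  have h2 : ∀ u ∈ ⋀[ℝ]^2 V, ι ℝ e₂ * u ∈ S := fun u hu =>
    ⟨(⟨-u, Submodule.neg_mem _ hu⟩, 0), by simp [W12_apply]⟩
  have key : ∀ a b c : V, (a = e₁ ∨ a = e₂) → ι ℝ a * (ι ℝ b * ι ℝ c) ∈ S := by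
    rintro a b c (rfl | rfl)
    · exact h1 _ (mul_mem_ext2 b c)
    · exact h2 _ (mul_mem_ext2 b c)
  rcases h with rfl | rfl | rfl | rfl | rfl | rfl | rfl | rfl | rfl
  · exact key _ _ _ (Or.inl rfl)
  · exact key _ _ _ (Or.inr rfl)
  · rw [← mul_assoc, ι_anticomm' x y, neg_mul, mul_assoc]
    exact Submodule.neg_mem _ (key _ _ _ (Or.inl rfl))
  · rw [← mul_assoc, ι_anticomm' x y, neg_mul, mul_assoc]
    exact Submodule.neg_mem _ (key _ _ _ (Or.inr rfl))
  · rw [ι_anticomm' y z, mul_neg, ← mul_assoc, ι_anticomm' x z, neg_mul, neg_neg, mul_assoc]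
    exact key _ _ _ (Or.inl rfl)
  · rw [ι_anticomm' y z, mul_neg, ← mul_assoc, ι_anticomm' x z, neg_mul, neg_neg, mul_assoc]
    exact key _ _ _ (Or.inr rfl)
  · rw [← mul_assoc, ι_sq_zero, zero_mul]; exact Submodule.zero_mem _
  · rw [ι_sq_zero, mul_zero]; exact Submodule.zero_mem _
  · rw [ι_anticomm' y x, mul_neg, ← mul_assoc, ι_sq_zero, zero_mul, neg_zero]
    exact Submodule.zero_mem _

lemma three_of_four {β : Type*} [Fintype β] (hcard : Fintype.card β = 4) (a b x y z : β)
    (hab : a ≠ b) :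
    x = a ∨ x = b ∨ y = a ∨ y = b ∨ z = a ∨ z = b ∨ x = y ∨ y = z ∨ x = z := by
  classical
  by_contra hcon
  push_neg at hcon
  obtain ⟨hxa, hxb, hya, hyb, hza, hzb, hxy, hyz, hxz⟩ := hcon
  have h5 : ({x, y, z, a, b} : Finset β).card = 5 := by
    rw [Finset.card_insert_of_notMem (by simp [hxy, hxz, hxa, hxb]),
        Finset.card_insert_of_notMem (by simp [hyz, hya, hyb]),
        Finset.card_insert_of_notMem (by simp [hza, hzb]),
        Finset.card_pair hab]
  have hle := Finset.card_le_univ ({x, y, z, a, b} : Finset β)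
  rw [h5] at hle
  have := Finset.card_univ (α := β)
  omega

/-- For `V` 4-dimensional and `e₁, e₂` linearly independent, the map
`(X₁,X₂) ↦ e₁∧X₂ − e₂∧X₁` from `⋀²V × ⋀²V` is surjective onto `⋀³V` and its kernel has
dimension 8. -/

theorem W12_surjective_ker_finrank_eight [FiniteDimensional ℝ V]
    (hdim : Module.finrank ℝ V = 4) (e₁ e₂ : V)
    (hind : LinearIndependent ℝ ![e₁, e₂]) :
    LinearMap.range (W12 e₁ e₂) = ⋀[ℝ]^3 V ∧
    Module.finrank ℝ (LinearMap.ker (W12 e₁ e₂)) = 8 := by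
  classical
  have b4 : Module.Basis (Fin 4) ℝ V := Module.finBasisOfFinrankEq ℝ V hdim
  have hfin2 : Module.finrank ℝ (⋀[ℝ]^2 V : Submodule ℝ (ExteriorAlgebra ℝ V)) = 6 := by
    rw [finrank_exteriorPower_eq b4]
    decide
  have hfin3 : Module.finrank ℝ (⋀[ℝ]^3 V : Submodule ℝ (ExteriorAlgebra ℝ V)) = 4 := by
    rw [finrank_exteriorPower_eq b4]
    decide
  haveI hFD2 : FiniteDimensional ℝ (⋀[ℝ]^2 V : Submodule ℝ (ExteriorAlgebra ℝ V)) := by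
    rw [← span_iMulti_family b4 2]
    exact FiniteDimensional.span_of_finite ℝ (Set.finite_range _)
  have hne : e₁ ≠ e₂ := by
    intro h
    have := hind.injective (a₁ := 0) (a₂ := 1) (by simpa using h)
    simp at this
  have hsub : LinearIndepOn ℝ id (Set.range ![e₁, e₂]) := hind.linearIndepOn_id
  set Bset := hsub.extend (Set.subset_univ _) with hBset
  let bE : Module.Basis Bset ℝ V := Module.Basis.extend hsub
  haveI : Fintype Bset := FiniteDimensional.fintypeBasisIndex bE
  have hcardB : Fintype.card Bset = 4 := by rw [← Module.finrank_eq_card_basis bE, hdim]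
  have he₁ : e₁ ∈ Bset := hsub.subset_extend _ ⟨0, rfl⟩
  have he₂ : e₂ ∈ Bset := hsub.subset_extend _ ⟨1, rfl⟩
  have hrange : LinearMap.range (W12 e₁ e₂) = ⋀[ℝ]^3 V := by
    refine le_antisymm ?_ ?_
    · rintro u ⟨X, rfl⟩
      rw [W12_apply]
      exact Submodule.sub_mem _ (mem_ext3 _ X.2.2) (mem_ext3 _ X.1.2)
    · rw [← ιMulti_span_fixedDegree, Submodule.span_le]
      rintro _ ⟨v, rfl⟩
      refine iMulti_mem_of_basis bE _ (fun m => ?_) v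
      rw [iMulti_three_apply]
      have hB : ∀ i : Fin 3, bE (m i) = ↑(m i) := fun i => Module.Basis.extend_apply_self hsub (m i)
      have hdisj := three_of_four hcardB ⟨e₁, he₁⟩ ⟨e₂, he₂⟩ (m 0) (m 1) (m 2)
        (fun hc => hne (congrArg Subtype.val hc))
      apply triple_mem
      rcases hdisj with h | h | h | h | h | h | h | h | h
      · exact Or.inl ((hB 0).trans (congrArg Subtype.val h))
      · exact Or.inr (Or.inl ((hB 0).trans (congrArg Subtype.val h)))
      · exact Or.inr (Or.inr (Or.inl ((hB 1).trans (congrArg Subtype.val h))))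
      · exact Or.inr (Or.inr (Or.inr (Or.inl ((hB 1).trans (congrArg Subtype.val h)))))
      · exact Or.inr (Or.inr (Or.inr (Or.inr (Or.inl ((hB 2).trans (congrArg Subtype.val h))))))
      · exact Or.inr (Or.inr (Or.inr (Or.inr (Or.inr (Or.inl
          ((hB 2).trans (congrArg Subtype.val h)))))))
      · exact Or.inr (Or.inr (Or.inr (Or.inr (Or.inr (Or.inr (Or.inl
          ((hB 0).trans ((congrArg Subtype.val h).trans (hB 1).symm))))))))
      · exact Or.inr (Or.inr (Or.inr (Or.inr (Or.inr (Or.inr (Or.inr (Or.inl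
          ((hB 1).trans ((congrArg Subtype.val h).trans (hB 2).symm)))))))))
      · exact Or.inr (Or.inr (Or.inr (Or.inr (Or.inr (Or.inr (Or.inr (Or.inr
          ((hB 0).trans ((congrArg Subtype.val h).trans (hB 2).symm)))))))))
  refine ⟨hrange, ?_⟩
  have hrn := LinearMap.finrank_range_add_finrank_ker (W12 e₁ e₂)
  have hfr : Module.finrank ℝ (LinearMap.range (W12 e₁ e₂)) = 4 := by
    rw [hrange]; exact hfin3
  haveI : Module.Free ℝ (⋀[ℝ]^2 V : Submodule ℝ (ExteriorAlgebra ℝ V)) :=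
    Module.Free.of_divisionRing ℝ _
  have hprod : Module.finrank ℝ ((⋀[ℝ]^2 V) × (⋀[ℝ]^2 V) :) = 12 := by
    rw [Module.finrank_prod, hfin2]
  rw [hfr, hprod] at hrn
  omega
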